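/- Let p ∈ (1,∞) and n ∈ ℕ. Define T_a : ℝ² → ℝ for a₁, a₂ > 0 by T(x₁,x₂) = (((−a₁) ∨ (x₁/a₂)) ∧ a₁) · (((−a₂) ∨ (x₂/a₁)) ∧ a₂). Then T satisfies |T(x) − T(y)| ≤ |x₁ − y₁| + |x₂ − y₂| for all x, y ∈ ℝ² and T(0,0) = 0. Consequently, if (E, F) is a p-energy form on a measure space satisfying the generalized p-contraction property, then for f, g ∈ F ∩ L^∞: f·g ∈ F and E(fg)^{1/p} ≤ ‖g‖_∞ E(f)^{1/p} + ‖f‖_∞ E(g)^{1/p} (Leibniz-type inequality). -/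
import Mathlib

private lemma clamp_lip (c s t : ℝ) :
    |min (max (-c) s) c - min (max (-c) t) c| ≤ |s - t| := by
  refine (abs_min_sub_min_le_max _ _ _ _).trans ?_
  have h1 : |max (-c) s - max (-c) t| ≤ |s - t| := by
    rw [max_comm (-c) s, max_comm (-c) t]
    exact abs_max_sub_max_le_abs s t (-c)
  have h2 : |c - c| ≤ |s - t| := by simp [abs_nonneg]
  exact max_le h1 h2

private lemma clamp_abs {c : ℝ} (hc : 0 < c) (t : ℝ) :
    |min (max (-c) t) c| ≤ c := by
  rw [abs_le]
  exact ⟨le_min (le_max_left _ _) (by linarith), min_le_right _ _⟩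

private lemma T_lip {a₁ a₂ : ℝ} (ha₁ : 0 < a₁) (ha₂ : 0 < a₂) (x₁ x₂ y₁ y₂ : ℝ) :
    |min (max (-a₁) (x₁ / a₂)) a₁ * min (max (-a₂) (x₂ / a₁)) a₂
        - min (max (-a₁) (y₁ / a₂)) a₁ * min (max (-a₂) (y₂ / a₁)) a₂|
      ≤ |x₁ - y₁| + |x₂ - y₂| := by
  set A := min (max (-a₁) (x₁ / a₂)) a₁ with hA
  set B := min (max (-a₂) (x₂ / a₁)) a₂ with hB
  set C := min (max (-a₁) (y₁ / a₂)) a₁ with hC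
  set D := min (max (-a₂) (y₂ / a₁)) a₂ with hD
  have key : A * B - C * D = A * (B - D) + D * (A - C) := by ring
  calc |A * B - C * D| = |A * (B - D) + D * (A - C)| := by rw [key]
    _ ≤ |A * (B - D)| + |D * (A - C)| := abs_add_le _ _
    _ = |A| * |B - D| + |D| * |A - C| := by rw [abs_mul, abs_mul]
    _ ≤ a₁ * (|x₂ - y₂| / a₁) + a₂ * (|x₁ - y₁| / a₂) := by
        have h1 : |B - D| ≤ |x₂ - y₂| / a₁ := by
          have := clamp_lip a₂ (x₂ / a₁) (y₂ / a₁)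
          rwa [div_sub_div_same, abs_div, abs_of_pos ha₁] at this
        have h2 : |A - C| ≤ |x₁ - y₁| / a₂ := by
          have := clamp_lip a₁ (x₁ / a₂) (y₁ / a₂)
          rwa [div_sub_div_same, abs_div, abs_of_pos ha₂] at this
        exact add_le_add
          (mul_le_mul (clamp_abs ha₁ _) h1 (abs_nonneg _) ha₁.le)
          (mul_le_mul (clamp_abs ha₂ _) h2 (abs_nonneg _) ha₂.le)
    _ = |x₂ - y₂| + |x₁ - y₁| := by
        field_simp
    _ = |x₁ - y₁| + |x₂ - y₂| := by ring

theorem stmt_18 {X : Type*} (p : ℝ) (hp : 1 < p)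
    (F : Submodule ℝ (X → ℝ)) (E : (X → ℝ) → ℝ)
    (hE0 : ∀ u ∈ F, 0 ≤ E u)
    (hhom : ∀ (a : ℝ), ∀ u ∈ F, E (a • u) = |a| ^ p * E u)
    (htri : ∀ u ∈ F, ∀ v ∈ F, E (u + v) ^ (1 / p) ≤ E u ^ (1 / p) + E v ^ (1 / p))
    (hGC : ∀ (n₁ n₂ : ℕ) (q₁ q₂ : ℝ), 0 < q₁ → q₁ ≤ p → p ≤ q₂ →
      ∀ T : (Fin n₁ → ℝ) → (Fin n₂ → ℝ), T 0 = 0 →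
        (∀ x y : Fin n₁ → ℝ,
          (∑ l : Fin n₂, |T x l - T y l| ^ q₂) ^ (1 / q₂)
            ≤ (∑ k : Fin n₁, |x k - y k| ^ q₁) ^ (1 / q₁)) →
        ∀ u : Fin n₁ → X → ℝ, (∀ k, u k ∈ F) →
          (∀ l, (fun z => T (fun k => u k z) l) ∈ F) ∧
          (∑ l : Fin n₂, E (fun z => T (fun k => u k z) l) ^ (q₂ / p)) ^ (1 / q₂)
            ≤ (∑ k : Fin n₁, E (u k) ^ (q₁ / p)) ^ (1 / q₁))
    (hGCtop : ∀ (n₁ n₂ : ℕ) (q₁ : ℝ), 0 < q₁ → q₁ ≤ p →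
      ∀ T : (Fin n₁ → ℝ) → (Fin n₂ → ℝ), T 0 = 0 →
        (∀ (x y : Fin n₁ → ℝ) (l : Fin n₂),
          |T x l - T y l| ≤ (∑ k : Fin n₁, |x k - y k| ^ q₁) ^ (1 / q₁)) →
        ∀ u : Fin n₁ → X → ℝ, (∀ k, u k ∈ F) →
          (∀ l, (fun z => T (fun k => u k z) l) ∈ F) ∧
          ∀ l : Fin n₂, E (fun z => T (fun k => u k z) l) ^ (1 / p)
            ≤ (∑ k : Fin n₁, E (u k) ^ (q₁ / p)) ^ (1 / q₁)) :
    (∀ a₁ a₂ : ℝ, 0 < a₁ → 0 < a₂ →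
        (min (max (-a₁) (0 / a₂)) a₁ * min (max (-a₂) (0 / a₁)) a₂ = 0) ∧
        ∀ x₁ x₂ y₁ y₂ : ℝ,
          |min (max (-a₁) (x₁ / a₂)) a₁ * min (max (-a₂) (x₂ / a₁)) a₂
              - min (max (-a₁) (y₁ / a₂)) a₁ * min (max (-a₂) (y₂ / a₁)) a₂|
            ≤ |x₁ - y₁| + |x₂ - y₂|) ∧
    (∀ f g : X → ℝ, f ∈ F → g ∈ F →
      ∀ Mf Mg : ℝ, (∀ z, |f z| ≤ Mf) → (∀ z, |g z| ≤ Mg) →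
        f * g ∈ F ∧
        E (f * g) ^ (1 / p) ≤ Mg * E f ^ (1 / p) + Mf * E g ^ (1 / p)) := by
  have hp0 : 0 < p := lt_trans one_pos hp
  have hpne : p ≠ 0 := ne_of_gt hp0
  have hE00 : E (0 : X → ℝ) = 0 := by
    have := hhom 0 0 F.zero_mem
    simpa [Real.zero_rpow hpne] using this
  constructor
  · intro a₁ a₂ ha₁ ha₂
    constructor
    · have h1 : min (max (-a₁) (0 / a₂)) a₁ = 0 := by
        rw [zero_div, max_eq_right (by linarith), min_eq_left ha₁.le]
      rw [h1, zero_mul]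
    · exact fun x₁ x₂ y₁ y₂ => T_lip ha₁ ha₂ x₁ x₂ y₁ y₂
  · intro f g hf hg Mf Mg hMf hMg
    -- degenerate case helper
    by_cases hzero : f * g = 0 ∧ E f = 0 ∧ E g = 0
    · obtain ⟨hfg, hEf, hEg⟩ := hzero
      refine ⟨hfg ▸ F.zero_mem, ?_⟩
      rw [hfg, hE00, hEf, hEg, Real.zero_rpow (by positivity : (1:ℝ)/p ≠ 0)]
      simp
    · -- X must be nonempty and Mf, Mg handled
      rcases isEmpty_or_nonempty X with hX | hX
      · exfalso
        apply hzero
        have h0 : ∀ h : X → ℝ, h = 0 := fun h => funext fun z => (hX.false z).elim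
        exact ⟨h0 _, by rw [h0 f, hE00], by rw [h0 g, hE00]⟩
      · obtain ⟨z₀⟩ := hX
        have hMf0 : 0 ≤ Mf := (abs_nonneg _).trans (hMf z₀)
        have hMg0 : 0 ≤ Mg := (abs_nonneg _).trans (hMg z₀)
        by_cases hMfz : Mf = 0
        · have hf0 : f = 0 := funext fun z => abs_eq_zero.mp
            (le_antisymm (hMfz ▸ hMf z) (abs_nonneg _))
          have hfg : f * g = 0 := by rw [hf0]; ext z; simp
          refine ⟨hfg ▸ F.zero_mem, ?_⟩
          rw [hfg, hE00, Real.zero_rpow (by positivity : (1:ℝ)/p ≠ 0)]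
          have h1 : E f = 0 := by rw [hf0, hE00]
          rw [h1, Real.zero_rpow (by positivity : (1:ℝ)/p ≠ 0), hMfz]
          simp
        · by_cases hMgz : Mg = 0
          · have hg0 : g = 0 := funext fun z => abs_eq_zero.mp
              (le_antisymm (hMgz ▸ hMg z) (abs_nonneg _))
            have hfg : f * g = 0 := by rw [hg0]; ext z; simp
            refine ⟨hfg ▸ F.zero_mem, ?_⟩
            rw [hfg, hE00, Real.zero_rpow (by positivity : (1:ℝ)/p ≠ 0)]
            have h1 : E g = 0 := by rw [hg0, hE00]
            rw [h1, Real.zero_rpow (by positivity : (1:ℝ)/p ≠ 0), hMgz]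
            simp
          · -- main case
            have hMfp : 0 < Mf := lt_of_le_of_ne hMf0 (Ne.symm hMfz)
            have hMgp : 0 < Mg := lt_of_le_of_ne hMg0 (Ne.symm hMgz)
            set T : (Fin 2 → ℝ) → Fin 1 → ℝ := fun x _ =>
              min (max (-Mf) (x 0 / Mg)) Mf * min (max (-Mg) (x 1 / Mf)) Mg with hT
            set u : Fin 2 → X → ℝ := ![Mg • f, Mf • g] with hu
            have hu0 : u 0 = Mg • f := rfl
            have hu1 : u 1 = Mf • g := rfl
            have humem : ∀ k, u k ∈ F := by
              intro k
              fin_cases k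
              · exact F.smul_mem Mg hf
              · exact F.smul_mem Mf hg
            have hT0 : T 0 = 0 := by
              funext l
              show min (max (-Mf) (0 / Mg)) Mf * min (max (-Mg) (0 / Mf)) Mg = 0
              rw [zero_div, max_eq_right (by linarith), min_eq_left hMfp.le, zero_mul]
            have hTlip : ∀ x y : Fin 2 → ℝ,
                (∑ l : Fin 1, |T x l - T y l| ^ p) ^ (1 / p)
                  ≤ (∑ k : Fin 2, |x k - y k| ^ (1:ℝ)) ^ (1 / (1:ℝ)) := by
              intro x y
              rw [Fin.sum_univ_one, Fin.sum_univ_two]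
              have hL : (|T x 0 - T y 0| ^ p) ^ (1 / p) = |T x 0 - T y 0| := by
                rw [← Real.rpow_mul (abs_nonneg _), mul_one_div, div_self hpne,
                  Real.rpow_one]
              rw [hL, Real.rpow_one, Real.rpow_one, one_div_one, Real.rpow_one]
              exact T_lip hMfp hMgp (x 0) (x 1) (y 0) (y 1)
            obtain ⟨hmem, hineq⟩ := hGC 2 1 1 p one_pos hp.le le_rfl T hT0 hTlip u humem
            have hkey : (fun z => T (fun k => u k z) (0 : Fin 1)) = f * g := by
              funext z
              show min (max (-Mf) (u 0 z / Mg)) Mf * min (max (-Mg) (u 1 z / Mf)) Mg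
                  = f z * g z
              have e0 : u 0 z / Mg = f z := by
                show Mg * f z / Mg = f z
                exact mul_div_cancel_left₀ _ hMgz
              have e1 : u 1 z / Mf = g z := by
                show Mf * g z / Mf = g z
                exact mul_div_cancel_left₀ _ hMfz
              obtain ⟨hf1, hf2⟩ := abs_le.mp (hMf z)
              obtain ⟨hg1, hg2⟩ := abs_le.mp (hMg z)
              rw [e0, e1, max_eq_right hf1, min_eq_left hf2,
                max_eq_right hg1, min_eq_left hg2]
            refine ⟨hkey ▸ hmem 0, ?_⟩
            rw [Fin.sum_univ_one, Fin.sum_univ_two, hu0, hu1, hkey,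
              div_self hpne, Real.rpow_one, one_div_one, Real.rpow_one] at hineq
            have eMf : E (Mg • f) ^ ((1:ℝ) / p) = Mg * E f ^ ((1:ℝ) / p) := by
              rw [hhom Mg f hf, abs_of_pos hMgp,
                Real.mul_rpow (by positivity) (hE0 f hf),
                ← Real.rpow_mul hMgp.le, mul_one_div, div_self hpne, Real.rpow_one]
            have eMg : E (Mf • g) ^ ((1:ℝ) / p) = Mf * E g ^ ((1:ℝ) / p) := by
              rw [hhom Mf g hg, abs_of_pos hMfp,
                Real.mul_rpow (by positivity) (hE0 g hg),
                ← Real.rpow_mul hMfp.le, mul_one_div, div_self hpne, Real.rpow_one]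
            rw [eMf, eMg] at hineq
            exact hineq
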